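/- Let r ≥ 2, let L_1,…,L_r be positive integers with Σ_{i=1}^r L_i = n, and set α_{i−1} = L_i/n for i = 1,…,r (so the leaf probabilities are α_0,…,α_{r−1}). Then there exists a binary tree with r leaves carrying the weights L_1,…,L_r in left-to-right order such that (a) along every root-to-leaf path, the powers P_j of the internal nodes encountered form a strictly increasing sequence, and (b) the merge cost satisfies M = Σ_{i=1}^r L_i·d_i ≤ n·H(L_1/n,…,L_r/n) + 2n. (This is the merge tree produced by powersort, whose merge cost is at most H·n + 2n and whose internal-node powers strictly increase along every root-to-leaf path.) -/

import Mathlib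

/-- A (full) binary tree: every internal node has exactly two children. -/
inductive BTree where
  | leaf : BTree
  | node : BTree → BTree → BTree

namespace BTree

/-- Depths of the leaves, in left-to-right order. -/
def leafDepths : BTree → List ℕ
  | leaf => [0]
  | node l r => l.leafDepths.map (· + 1) ++ r.leafDepths.map (· + 1)

/-- Number of internal nodes. -/
def internalCount : BTree → ℕ
  | leaf => 0
  | node l r => l.internalCount + 1 + r.internalCount

/-- Given a list `P` of labels attached to the internal nodes in symmetric
(in-)order, `T.powersMono P` says that the labels strictly increase along
every root-to-leaf path, i.e. whenever internal node `u` is a proper ancestor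
of internal node `v`, the label of `u` is strictly smaller than that of `v`. -/
def powersMono : BTree → List ℕ → Prop
  | leaf, _ => True
  | node l r, P =>
      (∀ q ∈ P.take l.internalCount, P.getD l.internalCount 0 < q) ∧
      (∀ q ∈ P.drop (l.internalCount + 1), P.getD l.internalCount 0 < q) ∧
      l.powersMono (P.take l.internalCount) ∧
      r.powersMono (P.drop (l.internalCount + 1))

end BTree

/-- The power of a split with boundaries `a < b`: the index of the first bit
in which the binary fractional expansions of `a` and `b` differ. -/
noncomputable def nodePower (a b : ℝ) : ℕ :=
  sInf {ℓ : ℕ | ⌊a * 2 ^ ℓ⌋ < ⌊b * 2 ^ ℓ⌋}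

namespace BTree

theorem leafDepths_length (T : BTree) : T.leafDepths.length = T.internalCount + 1 := by
  induction T with
  | leaf => rfl
  | node l r hl hr => simp [leafDepths, internalCount, hl, hr]; omega

end BTree

namespace PS

/-- index of a minimal element -/
def minIdx : List ℕ → ℕ
  | [] => 0
  | a :: l => if l = [] then 0 else (if a ≤ l.getD (minIdx l) 0 then 0 else minIdx l + 1)

theorem minIdx_lt {P : List ℕ} (h : P ≠ []) : minIdx P < P.length := by
  induction P with
  | nil => simp at h
  | cons a l ih =>
    by_cases hl : l = []
    · subst hl; simp [minIdx]
    · have := ih hl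
      simp only [minIdx, if_neg hl, List.length_cons]
      split <;> omega

theorem minIdx_min {P : List ℕ} (h : P ≠ []) :
    ∀ i < P.length, P.getD (minIdx P) 0 ≤ P.getD i 0 := by
  induction P with
  | nil => simp at h
  | cons a l ih =>
    intro i hi
    by_cases hl : l = []
    · subst hl
      simp only [List.length_cons, List.length_nil] at hi
      interval_cases i <;> simp [minIdx]
    · have hm := ih hl
      simp only [minIdx, if_neg hl]
      by_cases h1 : a ≤ l.getD (minIdx l) 0
      · rw [if_pos h1]
        match i with
        | 0 => simp
        | j+1 =>
          simp only [List.getD_cons_zero, List.getD_cons_succ]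
          exact le_trans h1 (hm j (by simpa using hi))
      · rw [if_neg h1]
        push_neg at h1
        match i with
        | 0 => simpa using le_of_lt h1
        | j+1 =>
          simp only [List.getD_cons_succ]
          exact hm j (by simpa using hi)

def build (P : List ℕ) : BTree :=
  if h : P = [] then BTree.leaf
  else
    have hm := minIdx_lt h
    BTree.node (build (P.take (minIdx P))) (build (P.drop (minIdx P + 1)))
termination_by P.length
decreasing_by
  · simpa using by omega
  · simp; omega

theorem build_internalCount (P : List ℕ) : (build P).internalCount = P.length := by
  induction P using build.induct with
  | case1 => rw [build]; simp [BTree.internalCount]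
  | case2 P h hm ih1 ih2 =>
    rw [build]
    simp only [h, dite_false, BTree.internalCount, ih1, ih2]
    simp only [List.length_take, List.length_drop]
    have := minIdx_lt h
    omega

end PS

namespace PS

def Good (P : List ℕ) : Prop :=
  ∀ j k, j < k → k < P.length → P.getD j 0 = P.getD k 0 →
    ∃ i, j < i ∧ i < k ∧ P.getD i 0 < P.getD j 0

theorem getD_take (P : List ℕ) (m i : ℕ) (h : i < m) :
    (P.take m).getD i 0 = P.getD i 0 := by
  simp [List.getD_eq_getElem?_getD, List.getElem?_take, h]

theorem getD_drop (P : List ℕ) (m i : ℕ) :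
    (P.drop m).getD i 0 = P.getD (m + i) 0 := by
  simp [List.getD_eq_getElem?_getD, List.getElem?_drop]

theorem good_take (P : List ℕ) (m : ℕ) (hg : Good P) : Good (P.take m) := by
  intro j k hjk hk he
  have hkm : k < m := lt_of_lt_of_le hk (by simp [List.length_take])
  have hklen : k < P.length := lt_of_lt_of_le hk (by simp [List.length_take])
  rw [getD_take P m j (lt_trans hjk hkm), getD_take P m k hkm] at he
  obtain ⟨i, h1, h2, h3⟩ := hg j k hjk hklen he
  exact ⟨i, h1, h2, by rwa [getD_take P m i (lt_trans h2 hkm), getD_take P m j (lt_trans hjk hkm)]⟩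

theorem good_drop (P : List ℕ) (m : ℕ) (hg : Good P) : Good (P.drop m) := by
  intro j k hjk hk he
  rw [getD_drop, getD_drop] at he
  have hklen : m + k < P.length := by
    simp [List.length_drop] at hk; omega
  obtain ⟨i, h1, h2, h3⟩ := hg (m + j) (m + k) (by omega) hklen he
  refine ⟨i - m, by omega, by omega, ?_⟩
  rw [getD_drop, getD_drop]
  have : m + (i - m) = i := by omega
  rw [this]; exact h3

theorem minIdx_strict {P : List ℕ} (h : P ≠ []) (hg : Good P) :
    ∀ i < P.length, i ≠ minIdx P → P.getD (minIdx P) 0 < P.getD i 0 := by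
  intro i hi hne
  have hmin := minIdx_min h i hi
  rcases lt_or_eq_of_le hmin with h' | h'
  · exact h'
  · exfalso
    rcases Nat.lt_or_ge i (minIdx P) with hlt | hge
    · obtain ⟨t, ht1, ht2, ht3⟩ := hg i (minIdx P) hlt (minIdx_lt h) h'.symm
      have := minIdx_min h t (lt_trans ht2 (minIdx_lt h))
      omega
    · have hlt : minIdx P < i := lt_of_le_of_ne hge (Ne.symm hne)
      obtain ⟨t, ht1, ht2, ht3⟩ := hg (minIdx P) i hlt hi h'
      have := minIdx_min h t (lt_trans ht2 hi)
      omega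

theorem powersMono_build (P : List ℕ) (hg : Good P) : (build P).powersMono P := by
  induction P using build.induct with
  | case1 => rw [build]; simp [BTree.powersMono]
  | case2 P h hm ih1 ih2 =>
    rw [build]
    simp only [h, dite_false]
    have hmlt := minIdx_lt h
    have hcnt : (build (P.take (minIdx P))).internalCount = minIdx P := by
      rw [build_internalCount]; simp [List.length_take]; omega
    refine ⟨?_, ?_, ?_, ?_⟩
    · rw [hcnt]
      intro q hq
      obtain ⟨j, hj, rfl⟩ := List.mem_iff_getElem.1 hq
      have hjm : j < minIdx P := by simp [List.length_take] at hj; omega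
      have : (P.take (minIdx P))[j] = (P.take (minIdx P)).getD j 0 := by
        rw [List.getD_eq_getElem]
      rw [this, getD_take P _ j hjm]
      exact minIdx_strict h hg j (by omega) (by omega)
    · rw [hcnt]
      intro q hq
      obtain ⟨j, hj, rfl⟩ := List.mem_iff_getElem.1 hq
      have hjlen : minIdx P + 1 + j < P.length := by
        simp [List.length_drop] at hj; omega
      have : (P.drop (minIdx P + 1))[j] = (P.drop (minIdx P + 1)).getD j 0 := by
        rw [List.getD_eq_getElem]
      rw [this, getD_drop]
      exact minIdx_strict h hg (minIdx P + 1 + j) hjlen (by omega)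
    · rw [hcnt]; exact ih1 (good_take P _ hg)
    · rw [hcnt]; exact ih2 (good_drop P _ hg)

end PS

namespace PS

theorem getD_append_lt (l1 l2 : List ℕ) (i : ℕ) (h : i < l1.length) :
    (l1 ++ l2).getD i 0 = l1.getD i 0 := by
  rw [List.getD_eq_getElem?_getD, List.getD_eq_getElem?_getD, List.getElem?_append, if_pos h]

theorem getD_append_ge (l1 l2 : List ℕ) (i : ℕ) (h : l1.length ≤ i) :
    (l1 ++ l2).getD i 0 = l2.getD (i - l1.length) 0 := by
  rw [List.getD_eq_getElem?_getD, List.getD_eq_getElem?_getD, List.getElem?_append_right h]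

theorem getD_map_add_one (l : List ℕ) (i : ℕ) (h : i < l.length) :
    (l.map (· + 1)).getD i 0 = l.getD i 0 + 1 := by
  simp [List.getD_eq_getElem?_getD, List.getElem?_map, List.getElem?_eq_getElem h]

def G (P : List ℕ) (i : ℕ) : ℕ :=
  max (P.getD (min i (P.length - 1)) 0) (P.getD (i - 1) 0)

theorem G_take_le (P : List ℕ) (m i : ℕ) (hm1 : 1 ≤ m) (hm2 : m < P.length) (hi : i ≤ m) :
    G (P.take m) i ≤ G P i := by
  have hlt : (P.take m).length = m := by simp [List.length_take]; omega
  unfold G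
  rw [hlt]
  rw [getD_take P m _ (show min i (m - 1) < m by omega),
      getD_take P m (i - 1) (by omega)]
  rcases Nat.lt_or_ge i m with h' | h'
  · rw [show min i (m - 1) = i by omega, show min i (P.length - 1) = i by omega]
  · rw [show i = m by omega, show min m (m - 1) = m - 1 by omega]
    omega

theorem G_drop_le (P : List ℕ) (m i : ℕ) (hm2 : m + 1 < P.length) (hi1 : m + 1 ≤ i)
    (hi2 : i ≤ P.length) : G (P.drop (m + 1)) (i - (m + 1)) ≤ G P i := by
  have hlt : (P.drop (m + 1)).length = P.length - (m + 1) := by simp [List.length_drop]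
  unfold G
  rw [hlt, getD_drop, getD_drop]
  rcases Nat.eq_or_lt_of_le hi1 with h0 | h0
  · rw [show m + 1 + min (i - (m + 1)) (P.length - (m + 1) - 1) = m + 1 by omega,
        show m + 1 + (i - (m + 1) - 1) = m + 1 by omega,
        show min i (P.length - 1) = m + 1 by omega]
    omega
  · rcases Nat.lt_or_ge i P.length with h1 | h1
    · rw [show m + 1 + min (i - (m + 1)) (P.length - (m + 1) - 1) = i by omega,
          show m + 1 + (i - (m + 1) - 1) = i - 1 by omega,
          show min i (P.length - 1) = i by omega]
    · rw [show m + 1 + min (i - (m + 1)) (P.length - (m + 1) - 1) = P.length - 1 by omega,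
          show m + 1 + (i - (m + 1) - 1) = P.length - 1 by omega,
          show min i (P.length - 1) = P.length - 1 by omega,
          show i - 1 = P.length - 1 by omega]
    
theorem build_leafDepths_length (P : List ℕ) : (build P).leafDepths.length = P.length + 1 := by
  rw [BTree.leafDepths_length, build_internalCount]

theorem depth_bound (P : List ℕ) : ∀ c : ℕ, Good P →
    (∀ i < P.length, c ≤ P.getD i 0) → P ≠ [] →
    ∀ i ≤ P.length, (build P).leafDepths.getD i 0 + c ≤ G P i + 1 := by
  induction P using build.induct with
  | case1 => intro c _ _ hP; exact absurd rfl hP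
  | case2 P h hm ih1 ih2 =>
    intro c hg hc _ i hi
    have hmlt := minIdx_lt h
    set m := minIdx P with hmdef
    have hstrict := minIdx_strict h hg
    rw [build]
    simp only [h, dite_false, BTree.leafDepths]
    rw [← hmdef]
    have hcm : c ≤ P.getD m 0 := hc m hmlt
    have hlen1 : (build (P.take m)).leafDepths.length = m + 1 := by
      rw [build_leafDepths_length]; simp [List.length_take]; omega
    have hlen2 : (build (P.drop (m + 1))).leafDepths.length = P.length - m := by
      rw [build_leafDepths_length]; simp [List.length_drop]; omega
    by_cases hil : i ≤ m
    · rw [getD_append_lt _ _ _ (by simp [hlen1]; omega),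
          getD_map_add_one _ _ (by omega)]
      by_cases hm0 : m = 0
      · -- left subtree is a single leaf
        have : P.take m = [] := by simp [hm0]
        rw [this, show i = 0 by omega]
        rw [build]
        simp only [dite_true, BTree.leafDepths, List.getD_cons_zero]
        have : G P 0 = P.getD 0 0 := by unfold G; simp
        rw [this]
        have := hc 0 (by omega)
        omega
      · have hlt' : (P.take m).length = m := by simp [List.length_take]; omega
        have htne : P.take m ≠ [] := by
          intro hcon; rw [hcon] at hlt'; simp at hlt'; omega
        have hsub := ih1 (P.getD m 0 + 1) (good_take P m hg)
          (by
            intro j hj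
            have hjm : j < m := by simp [List.length_take] at hj; omega
            rw [getD_take P m j hjm]
            exact hstrict j (by omega) (by omega))
          htne i (by simp [List.length_take]; omega)
        have hG := G_take_le P m i (by omega) hmlt hil
        omega
    · push_neg at hil
      rw [getD_append_ge _ _ _ (by simp [hlen1]; omega)]
      have hidx : i - (List.map (· + 1) (build (P.take m)).leafDepths).length = i - (m + 1) := by
        simp [hlen1]
      rw [hidx, getD_map_add_one _ _ (by omega)]
      by_cases hm0 : m + 1 = P.length
      · have : P.drop (m + 1) = [] := by
          apply List.eq_nil_of_length_eq_zero; simp [List.length_drop, hm0]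
        rw [this, show i - (m + 1) = 0 by omega]
        rw [build]
        simp only [dite_true, BTree.leafDepths, List.getD_cons_zero]
        have hGi : P.getD (P.length - 1) 0 ≤ G P i := by
          unfold G
          rw [show min i (P.length - 1) = P.length - 1 by omega]
          omega
        have := hc (P.length - 1) (by omega)
        have : P.getD m 0 = P.getD (P.length - 1) 0 := by rw [show m = P.length - 1 by omega]
        omega
      · have hlt' : (P.drop (m + 1)).length = P.length - (m + 1) := by
          simp [List.length_drop]
        have hdne : P.drop (m + 1) ≠ [] := by
          intro hcon; rw [hcon] at hlt'; simp at hlt'; omega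
        have hsub := ih2 (P.getD m 0 + 1) (good_drop P _ hg)
          (by
            intro j hj
            have hjm : m + 1 + j < P.length := by simp [List.length_drop] at hj; omega
            rw [getD_drop]
            exact hstrict (m + 1 + j) hjm (by omega))
          hdne (i - (m + 1)) (by simp [List.length_drop]; omega)
        have hG := G_drop_le P m i (by omega) (by omega) hi
        omega

end PS

namespace PS

theorem floor_lt_floor_of_int {a b : ℝ} {t : ℤ} (h1 : a < t) (h2 : (t : ℝ) ≤ b) :
    ⌊a⌋ < ⌊b⌋ :=
  lt_of_lt_of_le (Int.floor_lt.2 h1) (Int.le_floor.2 h2)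

theorem mem_power_set {a b : ℝ} {ℓ : ℕ} (h : 1 ≤ (b - a) * 2 ^ ℓ) :
    ⌊a * 2 ^ ℓ⌋ < ⌊b * 2 ^ ℓ⌋ := by
  refine floor_lt_floor_of_int (t := ⌊b * 2 ^ ℓ⌋) ?_ (Int.floor_le _)
  have h2 := Int.sub_one_lt_floor (b * 2 ^ ℓ)
  nlinarith [h2]

theorem power_set_nonempty {a b : ℝ} (hab : a < b) :
    {ℓ : ℕ | ⌊a * 2 ^ ℓ⌋ < ⌊b * 2 ^ ℓ⌋}.Nonempty := by
  obtain ⟨n, hn⟩ := pow_unbounded_of_one_lt (1 / (b - a)) (by norm_num : (1:ℝ) < 2)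
  refine ⟨n, mem_power_set ?_⟩
  rw [div_lt_iff₀ (by linarith)] at hn
  nlinarith

theorem nodePower_le {a b : ℝ} {ℓ : ℕ} (h : 1 ≤ (b - a) * 2 ^ ℓ) : nodePower a b ≤ ℓ :=
  Nat.sInf_le (mem_power_set h)

theorem nodePower_pos {a b : ℝ} (ha : 0 ≤ a) (hab : a < b) (hb : b < 1) :
    1 ≤ nodePower a b := by
  by_contra hcon
  push_neg at hcon
  interval_cases h : nodePower a b
  · have := Nat.sInf_mem (power_set_nonempty hab)
    rw [show sInf {ℓ : ℕ | ⌊a * 2 ^ ℓ⌋ < ⌊b * 2 ^ ℓ⌋} = nodePower a b from rfl, h] at this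
    simp only [Set.mem_setOf_eq, pow_zero, mul_one] at this
    rw [Int.floor_eq_zero_iff.2 ⟨ha, by linarith⟩, Int.floor_eq_zero_iff.2 ⟨by linarith, hb⟩] at this
    exact lt_irrefl 0 this

theorem halve_lt {y : ℝ} {t : ℤ} {ℓ : ℕ} (hℓ : 1 ≤ ℓ) (h : y * 2 ^ ℓ < 2 * t) :
    y * 2 ^ (ℓ - 1) < t := by
  have h2 : (2:ℝ) ^ ℓ = 2 ^ (ℓ - 1) * 2 := by
    rw [← pow_succ]; congr 1; omega
  rw [h2] at h; linarith

theorem halve_le {y : ℝ} {t : ℤ} {ℓ : ℕ} (hℓ : 1 ≤ ℓ) (h : 2 * t ≤ y * 2 ^ ℓ) :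
    (t : ℝ) ≤ y * 2 ^ (ℓ - 1) := by
  have h2 : (2:ℝ) ^ ℓ = 2 ^ (ℓ - 1) * 2 := by
    rw [← pow_succ]; congr 1; omega
  rw [h2] at h; linarith

theorem tiling (B : ℕ → ℝ) (x : ℝ) : ∀ k j, j ≤ k → B j < x → x ≤ B k →
    ∃ i, j ≤ i ∧ i < k ∧ B i < x ∧ x ≤ B (i + 1) := by
  intro k
  induction k with
  | zero => intro j hj h1 h2; interval_cases j; linarith
  | succ k ih =>
    intro j hj h1 h2
    rcases Nat.lt_or_ge k j with h' | h'
    · have : j = k + 1 := by omega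
      subst this; linarith
    · by_cases hx : B k < x
      · exact ⟨k, h', by omega, hx, h2⟩
      · push_neg at hx
        obtain ⟨i, hi1, hi2, hi3, hi4⟩ := ih j h' h1 hx
        exact ⟨i, hi1, by omega, hi3, hi4⟩

theorem power_unique (A : ℕ → ℝ) (N : ℕ)
    (hs : ∀ k < N, A k < A (k + 1))
    (h0 : 0 ≤ A 0) (h1 : A N < 1)
    (j k : ℕ) (hjk : j < k) (hk : k < N)
    (he : nodePower (A j) (A (j + 1)) = nodePower (A k) (A (k + 1))) :
    ∃ i, j < i ∧ i < k ∧
      nodePower (A i) (A (i + 1)) < nodePower (A j) (A (j + 1))  := by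
  have Amono : ∀ p q, p ≤ q → q ≤ N → A p ≤ A q := by
    intro p q hpq hq
    induction q with
    | zero => interval_cases p; rfl
    | succ q ih =>
      rcases Nat.eq_or_lt_of_le hpq with h' | h'
      · subst h'; rfl
      · exact le_trans (ih (by omega) (by omega)) (le_of_lt (hs q (by omega)))
  have hA0le : ∀ t, t ≤ N → 0 ≤ A t := fun t ht => le_trans h0 (Amono 0 t (by omega) ht)
  have hAlt1 : ∀ t, t ≤ N → A t < 1 := fun t ht => lt_of_le_of_lt (Amono t N ht le_rfl) h1
  set ℓ := nodePower (A j) (A (j + 1)) with hℓdef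
  have hjlt : A j < A (j + 1) := hs j (by omega)
  have hklt : A k < A (k + 1) := hs k hk
  have hℓ1 : 1 ≤ ℓ := nodePower_pos (hA0le j (by omega)) hjlt (hAlt1 (j+1) (by omega))
  have hjmem : ⌊A j * 2 ^ ℓ⌋ < ⌊A (j + 1) * 2 ^ ℓ⌋ := by
    have := Nat.sInf_mem (power_set_nonempty hjlt)
    rwa [show sInf {t : ℕ | ⌊A j * 2 ^ t⌋ < ⌊A (j+1) * 2 ^ t⌋} = ℓ from rfl] at this
  have hkmem : ⌊A k * 2 ^ ℓ⌋ < ⌊A (k + 1) * 2 ^ ℓ⌋ := by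
    have := Nat.sInf_mem (power_set_nonempty hklt)
    rwa [show sInf {t : ℕ | ⌊A k * 2 ^ t⌋ < ⌊A (k+1) * 2 ^ t⌋} = nodePower (A k) (A (k+1)) from rfl,
      ← he] at this
  have hjnot : ¬ ⌊A j * 2 ^ (ℓ - 1)⌋ < ⌊A (j + 1) * 2 ^ (ℓ - 1)⌋ := by
    have := Nat.notMem_of_lt_sInf (s := {t : ℕ | ⌊A j * 2 ^ t⌋ < ⌊A (j+1) * 2 ^ t⌋})
      (show ℓ - 1 < ℓ by omega)
    simpa using this
  set m := ⌊A (j + 1) * 2 ^ ℓ⌋ with hmdef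
  have hm1 : A j * 2 ^ ℓ < (m : ℝ) := by
    have h2 : (⌊A j * 2 ^ ℓ⌋ : ℝ) + 1 ≤ m := by exact_mod_cast hjmem
    have := Int.lt_floor_add_one (A j * 2 ^ ℓ)
    linarith
  have hm2 : (m : ℝ) ≤ A (j + 1) * 2 ^ ℓ := Int.floor_le _
  -- m is odd
  have hodd : Odd m := by
    rcases Int.even_or_odd m with hev | hod
    · exfalso
      obtain ⟨t, ht⟩ := hev
      apply hjnot
      refine floor_lt_floor_of_int (t := t) (halve_lt hℓ1 ?_) (halve_le hℓ1 ?_)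
      · rw [ht] at hm1; push_cast at hm1 ⊢; linarith
      · rw [ht] at hm2; push_cast at hm2 ⊢; linarith
    · exact hod
  -- m + 1 ≤ A (k+1) * 2^ℓ
  have hm3 : ((m : ℝ) + 1) ≤ A (k + 1) * 2 ^ ℓ := by
    have hk1 : A k * 2 ^ ℓ < (⌊A (k + 1) * 2 ^ ℓ⌋ : ℝ) := by
      have h2 : (⌊A k * 2 ^ ℓ⌋ : ℝ) + 1 ≤ ⌊A (k + 1) * 2 ^ ℓ⌋ := by exact_mod_cast hkmem
      have := Int.lt_floor_add_one (A k * 2 ^ ℓ)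
      linarith
    have hjk1 : A (j + 1) ≤ A k := Amono (j + 1) k (by omega) (by omega)
    have hpow : (0:ℝ) < 2 ^ ℓ := by positivity
    have : (m : ℝ) < (⌊A (k + 1) * 2 ^ ℓ⌋ : ℝ) := by
      calc (m:ℝ) ≤ A (j+1) * 2 ^ ℓ := hm2
        _ ≤ A k * 2 ^ ℓ := by nlinarith
        _ < _ := hk1
    have hmm : m + 1 ≤ ⌊A (k + 1) * 2 ^ ℓ⌋ := by exact_mod_cast this
    calc ((m:ℝ) + 1) ≤ (⌊A (k + 1) * 2 ^ ℓ⌋ : ℝ) := by exact_mod_cast hmm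
      _ ≤ A (k + 1) * 2 ^ ℓ := Int.floor_le _
  -- tile
  have hm0 : A (j + 1) * 2 ^ ℓ < (m : ℝ) + 1 := Int.lt_floor_add_one _
  obtain ⟨i, hi1, hi2, hi3, hi4⟩ := tiling (fun t => A t * 2 ^ ℓ) ((m : ℝ) + 1)
    (k + 1) (j + 1) (by omega) (by exact hm0) (by exact hm3)
  obtain ⟨t, ht⟩ := hodd
  have hi5 : ⌊A i * 2 ^ (ℓ - 1)⌋ < ⌊A (i + 1) * 2 ^ (ℓ - 1)⌋ := by
    refine floor_lt_floor_of_int (t := t + 1) (halve_lt hℓ1 ?_) (halve_le hℓ1 ?_)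
    · rw [ht] at hi3; push_cast at hi3 ⊢; linarith
    · rw [ht] at hi4; push_cast at hi4 ⊢; linarith
  have hple : nodePower (A i) (A (i + 1)) ≤ ℓ - 1 := Nat.sInf_le hi5
  have hik : i ≠ k := by
    intro hcon
    rw [hcon] at hple
    rw [← he] at hple
    omega
  exact ⟨i, by omega, by omega, by omega⟩

end PS

noncomputable def Aseq (L : ℕ → ℕ) (n : ℕ) : ℕ → ℝ :=
  fun k => (∑ i ∈ Finset.range k, (L i : ℝ) / n) + (L k : ℝ) / (2 * n)

/-- Powersort's guarantee: for `r ≥ 2` runs of positive lengths `L₁,…,L_r`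
(`0`-indexed here: leaf `i` has weight `L i`, `i = 0,…,r-1`) summing to `n`,
there is a merge tree whose internal-node powers (w.r.t. the leaf
probabilities `αᵢ = Lᵢ/n`) strictly increase along every root-to-leaf path
and whose merge cost is at most `n·H(L₁/n,…,L_r/n) + 2n`. -/
theorem powersort_merge_cost
    (r n : ℕ) (hr : 2 ≤ r)
    (L : ℕ → ℕ) (hL : ∀ i < r, 0 < L i)
    (hn : ∑ i ∈ Finset.range r, L i = n) :
    ∃ T : BTree,
      T.leafDepths.length = r ∧
      T.powersMono ((List.range (r - 1)).map (fun k =>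
        nodePower
          ((∑ i ∈ Finset.range (k + 1), (L i : ℝ) / n) - (L k : ℝ) / (2 * n))
          ((∑ i ∈ Finset.range (k + 1), (L i : ℝ) / n) + (L (k + 1) : ℝ) / (2 * n)))) ∧
      (∑ i ∈ Finset.range r, (L i : ℝ) * (T.leafDepths.getD i 0 : ℝ))
        ≤ (n : ℝ) * (∑ i ∈ Finset.range r, ((L i : ℝ) / n) * Real.logb 2 ((L i : ℝ) / n)⁻¹)
            + 2 * n := by
  classical
  have hnpos : 0 < n := by
    rw [← hn]
    exact Finset.sum_pos (fun i hi => hL i (Finset.mem_range.1 hi)) ⟨0, by simp; omega⟩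
  have hnR : (0:ℝ) < n := by exact_mod_cast hnpos
  have hnne : (n:ℝ) ≠ 0 := ne_of_gt hnR
  have hsumR : ∑ i ∈ Finset.range r, (L i : ℝ) = n := by exact_mod_cast hn
  have hprob : ∑ i ∈ Finset.range r, (L i : ℝ) / n = 1 := by
    rw [← Finset.sum_div, hsumR, div_self hnne]
  have hLle : ∀ j < r, L j ≤ n := by
    intro j hj
    rw [← hn]
    exact Finset.single_le_sum (fun i _ => Nat.zero_le _) (Finset.mem_range.2 hj)
  set A : ℕ → ℝ := Aseq L n with hA
  have hAdiff : ∀ k, A (k + 1) - A k = ((L k : ℝ) + (L (k + 1) : ℝ)) / (2 * n) := by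
    intro k
    simp only [hA, Aseq, Finset.sum_range_succ]
    field_simp
    ring
  have hs : ∀ k < r - 1, A k < A (k + 1) := by
    intro k hk
    have h1 := hL k (by omega)
    have h2 := hL (k + 1) (by omega)
    have h3 : (0:ℝ) < ((L k : ℝ) + (L (k + 1) : ℝ)) / (2 * n) := by
      have : (0:ℝ) < (L k : ℝ) := by exact_mod_cast h1
      have : (0:ℝ) < (L (k+1) : ℝ) := by exact_mod_cast h2
      positivity
    have := hAdiff k
    linarith
  have h0 : ∀ t, 0 ≤ A t := by
    intro t
    simp only [hA, Aseq]
    positivity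
  have h1 : A (r - 1) < 1 := by
    have e : (r - 1) + 1 = r := by omega
    have h2 : ∑ i ∈ Finset.range ((r - 1) + 1), (L i : ℝ) / n = 1 := by rw [e]; exact hprob
    rw [Finset.sum_range_succ] at h2
    have hLr := hL (r - 1) (by omega)
    have hLrR : (0:ℝ) < (L (r-1) : ℝ) := by exact_mod_cast hLr
    have hlt : (L (r-1) : ℝ) / (2 * n) < (L (r-1) : ℝ) / n :=
      div_lt_div_of_pos_left hLrR hnR (by linarith)
    simp only [hA, Aseq]
    linarith
  have hmono : ∀ p q, p ≤ q → q ≤ r - 1 → A p ≤ A q := by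
    intro p q hpq hq
    induction q with
    | zero => interval_cases p; rfl
    | succ q ih =>
      rcases Nat.eq_or_lt_of_le hpq with h' | h'
      · subst h'; rfl
      · exact le_trans (ih (by omega) (by omega)) (le_of_lt (hs q (by omega)))
  set pw : ℕ → ℕ := fun k => nodePower (A k) (A (k + 1)) with hpw
  have hpwpos : ∀ k < r - 1, 1 ≤ pw k := by
    intro k hk
    apply PS.nodePower_pos (h0 k) (hs k hk)
    exact lt_of_le_of_lt (hmono (k + 1) (r - 1) (by omega) le_rfl) h1
  set Pl : List ℕ := (List.range (r - 1)).map pw with hPldef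
  have hlenPl : Pl.length = r - 1 := by simp [hPldef]
  have hget : ∀ j < r - 1, Pl.getD j 0 = pw j := by
    intro j hj
    rw [hPldef, List.getD_eq_getElem?_getD, List.getElem?_map, List.getElem?_range hj]
    rfl
  have hGood : PS.Good Pl := by
    intro j k hjk hk he
    rw [hlenPl] at hk
    rw [hget j (by omega), hget k (by omega)] at he
    obtain ⟨i, hi1, hi2, hi3⟩ := PS.power_unique A (r - 1) hs (h0 0) h1 j k hjk hk he
    exact ⟨i, hi1, hi2, by rw [hget i (by omega), hget j (by omega)]; exact hi3⟩
  have hone : ∀ t < Pl.length, 1 ≤ Pl.getD t 0 := by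
    intro t ht
    rw [hlenPl] at ht
    rw [hget t ht]
    exact hpwpos t ht
  have hne : Pl ≠ [] := by
    intro hcon
    rw [hcon] at hlenPl
    simp at hlenPl
    omega
  refine ⟨PS.build Pl, ?_, ?_, ?_⟩
  · rw [PS.build_leafDepths_length, hlenPl]; omega
  · have hlist : ((List.range (r - 1)).map (fun k =>
        nodePower
          ((∑ i ∈ Finset.range (k + 1), (L i : ℝ) / n) - (L k : ℝ) / (2 * n))
          ((∑ i ∈ Finset.range (k + 1), (L i : ℝ) / n) + (L (k + 1) : ℝ) / (2 * n)))) = Pl := by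
      rw [hPldef]
      apply List.map_congr_left
      intro k hk
      have e1 : (∑ i ∈ Finset.range (k + 1), (L i : ℝ) / n) - (L k : ℝ) / (2 * n) = A k := by
        simp only [hA, Aseq, Finset.sum_range_succ]
        field_simp
        ring
      have e2 : (∑ i ∈ Finset.range (k + 1), (L i : ℝ) / n) + (L (k + 1) : ℝ) / (2 * n)
          = A (k + 1) := by
        simp only [hA, Aseq]
      rw [e1, e2]
    rw [hlist]
    exact PS.powersMono_build Pl hGood
  · -- merge cost bound
    have hdep : ∀ i < r, (PS.build Pl).leafDepths.getD i 0 ≤ PS.G Pl i := by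
      intro i hi
      have := PS.depth_bound Pl 1 hGood hone hne i (by rw [hlenPl]; omega)
      omega
    have hpw_le : ∀ k < r - 1,
        (pw k : ℝ) ≤ Real.logb 2 ((2 * n) / ((L k : ℝ) + (L (k + 1) : ℝ))) + 1 := by
      intro k hk
      have hLk := hL k (by omega)
      have hLk1 := hL (k + 1) (by omega)
      have hLkR : (0:ℝ) < (L k : ℝ) := by exact_mod_cast hLk
      have hLk1R : (0:ℝ) < (L (k+1) : ℝ) := by exact_mod_cast hLk1
      have hden : (0:ℝ) < (L k : ℝ) + (L (k + 1) : ℝ) := by positivity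
      set x : ℝ := (2 * n) / ((L k : ℝ) + (L (k + 1) : ℝ)) with hx
      have hx0 : 0 < x := by positivity
      have hx1 : 1 ≤ x := by
        rw [hx, le_div_iff₀ hden, one_mul]
        have h1 : L k + L (k + 1) ≤ 2 * n := by
          have := hLle k (by omega); have := hLle (k + 1) (by omega); omega
        push_cast
        exact_mod_cast h1
      have hlogb0 : 0 ≤ Real.logb 2 x := Real.logb_nonneg one_lt_two hx1
      set ℓ := ⌈Real.logb 2 x⌉₊ with hℓdef
      have hx2 : x ≤ 2 ^ ℓ := by
        have h2 : Real.logb 2 x ≤ (ℓ : ℝ) := Nat.le_ceil _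
        calc x = (2:ℝ) ^ (Real.logb 2 x) := (Real.rpow_logb two_pos (by norm_num) hx0).symm
          _ ≤ (2:ℝ) ^ (ℓ : ℝ) := Real.rpow_le_rpow_of_exponent_le one_le_two h2
          _ = 2 ^ ℓ := by rw [Real.rpow_natCast]
      have hmem : 1 ≤ (A (k + 1) - A k) * 2 ^ ℓ := by
        rw [hAdiff k]
        have e : ((L k : ℝ) + (L (k + 1) : ℝ)) / (2 * n) = 1 / x := by
          rw [hx]; field_simp
        rw [e, div_mul_eq_mul_div, one_mul, le_div_iff₀ hx0, one_mul]
        exact hx2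
      have hple : pw k ≤ ℓ := PS.nodePower_le hmem
      have hceil : (ℓ : ℝ) < Real.logb 2 x + 1 := Nat.ceil_lt_add_one hlogb0
      have : (pw k : ℝ) ≤ (ℓ : ℝ) := by exact_mod_cast hple
      rw [hx] at hceil ⊢
      linarith
    have hlogb_mono : ∀ i < r, ∀ k < r - 1, L i ≤ L k + L (k + 1) →
        Real.logb 2 ((2 * n) / ((L k : ℝ) + (L (k + 1) : ℝ)))
          ≤ Real.logb 2 ((2 * n) / (L i : ℝ)) := by
      intro i hi k hk hle
      have hLiR : (0:ℝ) < (L i : ℝ) := by exact_mod_cast hL i hi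
      have hdenR : (0:ℝ) < (L k : ℝ) + (L (k + 1) : ℝ) := by
        have : (0:ℝ) < (L k : ℝ) := by exact_mod_cast hL k (by omega)
        have : (0:ℝ) < (L (k+1) : ℝ) := by exact_mod_cast hL (k+1) (by omega)
        positivity
      apply Real.logb_le_logb_of_le (by norm_num : (1:ℝ) < 2) (by positivity)
      gcongr
      exact_mod_cast hle
    have hgoal_i : ∀ i < r,
        ((PS.build Pl).leafDepths.getD i 0 : ℝ) ≤ Real.logb 2 ((n : ℝ) / (L i : ℝ)) + 2 := by
      intro i hi
      set k1 : ℕ := min i (Pl.length - 1) with hk1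
      set k2 : ℕ := i - 1 with hk2
      have hk1lt : k1 < r - 1 := by rw [hk1, hlenPl]; omega
      have hk2lt : k2 < r - 1 := by omega
      have hb1 : L i ≤ L k1 + L (k1 + 1) := by
        rcases Nat.lt_or_ge i (r - 1) with h' | h'
        · have e : k1 = i := by rw [hk1, hlenPl]; omega
          rw [e]; omega
        · have e : k1 + 1 = i := by rw [hk1, hlenPl]; omega
          rw [← e]; omega
      have hb2 : L i ≤ L k2 + L (k2 + 1) := by
        rcases Nat.eq_zero_or_pos i with h' | h'
        · have e : k2 = i := by omega
          rw [e]; omega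
        · have e : k2 + 1 = i := by omega
          rw [← e]; omega
      have hbig : Real.logb 2 ((2 * n) / (L i : ℝ)) = Real.logb 2 ((n : ℝ) / (L i : ℝ)) + 1 := by
        have hLiR : (0:ℝ) < (L i : ℝ) := by exact_mod_cast hL i hi
        have e : (2 * (n:ℝ)) / (L i : ℝ) = 2 * ((n:ℝ) / (L i : ℝ)) := by ring
        rw [e, Real.logb_mul (by norm_num) (ne_of_gt (by positivity))]
        rw [Real.logb_self_eq_one (by norm_num : (1:ℝ) < 2)]
        ring
      have hd := hdep i hi
      have hG : PS.G Pl i = max (pw k1) (pw k2) := by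
        unfold PS.G
        rw [← hk1, ← hk2, hget k1 hk1lt]
        rw [hget k2 (by omega)]
      have hcast : ((PS.build Pl).leafDepths.getD i 0 : ℝ) ≤ (max (pw k1) (pw k2) : ℕ) := by
        exact_mod_cast le_trans hd (le_of_eq hG)
      have h1' : (pw k1 : ℝ) ≤ Real.logb 2 ((2 * n) / (L i : ℝ)) + 1 := by
        have ha := hpw_le k1 hk1lt
        have := hlogb_mono i hi k1 hk1lt hb1; linarith
      have h2' : (pw k2 : ℝ) ≤ Real.logb 2 ((2 * n) / (L i : ℝ)) + 1 := by
        have ha := hpw_le k2 hk2lt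
        have := hlogb_mono i hi k2 hk2lt hb2; linarith
      have hmaxR : ((max (pw k1) (pw k2) : ℕ) : ℝ) ≤ Real.logb 2 ((2 * n) / (L i : ℝ)) + 1 := by
        rw [Nat.cast_max]
        apply max_le h1' h2'
      rw [hbig] at hmaxR
      linarith
    have hstep : (∑ i ∈ Finset.range r, (L i : ℝ) * ((PS.build Pl).leafDepths.getD i 0 : ℝ))
        ≤ ∑ i ∈ Finset.range r, (L i : ℝ) * (Real.logb 2 ((n : ℝ) / (L i : ℝ)) + 2) := by
      apply Finset.sum_le_sum
      intro i hi
      have := hgoal_i i (Finset.mem_range.1 hi)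
      have hLnn : (0:ℝ) ≤ (L i : ℝ) := by positivity
      nlinarith
    refine le_trans hstep (le_of_eq ?_)
    have hterm : ∀ i ∈ Finset.range r,
        (L i : ℝ) * (Real.logb 2 ((n : ℝ) / (L i : ℝ)) + 2)
          = (n : ℝ) * (((L i : ℝ) / n) * Real.logb 2 ((L i : ℝ) / n)⁻¹) + 2 * (L i : ℝ) := by
      intro i hi
      rw [inv_div]
      have hLiR : (0:ℝ) < (L i : ℝ) := by exact_mod_cast hL i (Finset.mem_range.1 hi)
      field_simp
    rw [Finset.sum_congr rfl hterm, Finset.sum_add_distrib, ← Finset.mul_sum, ← Finset.mul_sum,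
      hsumR]
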